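/- For q ∈ ℂ with 0 < |q| < 1, m ∈ ℕ, and α, n ∈ ℕ with α, n ≥ 1, the difference formula holds: q^n β̃_{m,q}^{(α)}(n) - β̃_{m,q}^{(α)} = (q-1) ∑_{l=0}^{n-1} q^l [l]_{q^α}^m + (mα/[α]_q) ∑_{l=0}^{n-1} q^{αl+l} [l]_{q^α}^{m-1}. -/

import Mathlib

open Finset

noncomputable def qnum (q : ℂ) (x : ℕ) : ℂ := (1 - q ^ x) / (1 - q)

noncomputable def qB (q : ℂ) (a n : ℕ) : ℂ :=
  (1 - q) / (1 - q ^ a) ^ n *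
    ∑ l ∈ Finset.range (n + 1),
      (n.choose l : ℂ) * (-1) ^ l * ((a : ℂ) * l + 1) / (1 - q ^ (a * l + 1))

noncomputable def qBpoly (q : ℂ) (a n x : ℕ) : ℂ :=
  (1 - q) / (1 - q ^ a) ^ n *
    ∑ l ∈ Finset.range (n + 1),
      (n.choose l : ℂ) * (-1) ^ l * q ^ (a * l * x) * ((a : ℂ) * l + 1) / (1 - q ^ (a * l + 1))

lemma binom1 (t : ℂ) (m : ℕ) :
    ∑ l ∈ range (m + 1), (m.choose l : ℂ) * (-1) ^ l * t ^ l = (1 - t) ^ m := by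
  rw [show (1 : ℂ) - t = -t + 1 by ring, add_pow]
  refine Finset.sum_congr rfl fun l _ => ?_
  rw [neg_pow]
  ring

lemma binom2 (t : ℂ) (m : ℕ) :
    ∑ l ∈ range (m + 1), (m.choose l : ℂ) * (-1) ^ l * (l : ℂ) * t ^ l
      = -(m : ℂ) * t * (1 - t) ^ (m - 1) := by
  cases m with
  | zero => simp
  | succ k =>
    rw [Finset.sum_range_succ']
    have h : ∀ j ∈ range (k + 1),
        (((k + 1).choose (j + 1) : ℂ)) * (-1) ^ (j + 1) * ((j + 1 : ℕ) : ℂ) * t ^ (j + 1)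
          = (-((k : ℂ) + 1) * t) * ((k.choose j : ℂ) * (-1) ^ j * t ^ j) := by
      intro j _
      have hc : ((k + 1).choose (j + 1) : ℂ) * ((j + 1 : ℕ) : ℂ) = ((k : ℂ) + 1) * (k.choose j : ℂ) := by
        have h2 : ((k + 1) * k.choose j : ℕ) = ((k + 1).choose (j + 1) * (j + 1) : ℕ) :=
          Nat.add_one_mul_choose_eq k j
        exact_mod_cast h2.symm
      calc ((k + 1).choose (j + 1) : ℂ) * (-1) ^ (j + 1) * ((j + 1 : ℕ) : ℂ) * t ^ (j + 1)
          = (((k + 1).choose (j + 1) : ℂ) * ((j + 1 : ℕ) : ℂ)) * ((-1) ^ (j + 1) * t ^ (j + 1)) := by ring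
        _ = (((k : ℂ) + 1) * (k.choose j : ℂ)) * ((-1) ^ (j + 1) * t ^ (j + 1)) := by rw [hc]
        _ = (-((k : ℂ) + 1) * t) * ((k.choose j : ℂ) * (-1) ^ j * t ^ j) := by ring
    rw [Finset.sum_congr rfl h, ← Finset.mul_sum, binom1]
    simp only [Nat.succ_sub_one]
    push_cast
    ring

lemma qpow_ne_one (q : ℂ) (hq0 : q ≠ 0) (hq1 : ‖q‖ < 1) (k : ℕ) (hk : k ≠ 0) :
    (1 : ℂ) - q ^ k ≠ 0 := by
  intro h
  have hq : q ^ k = 1 := by linear_combination -h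
  have hlt : ‖q ^ k‖ < 1 := by
    rw [norm_pow]
    exact pow_lt_one₀ (norm_nonneg q) hq1 hk
  rw [hq] at hlt
  simp at hlt

lemma step (q : ℂ) (hq0 : q ≠ 0) (hq1 : ‖q‖ < 1) (m a : ℕ) (ha : 1 ≤ a) (x : ℕ) :
    q ^ (x + 1) * qBpoly q a m (x + 1) - q ^ x * qBpoly q a m x =
      (q - 1) * (q ^ x * qnum (q ^ a) x ^ m) +
        ((m : ℂ) * a / qnum q a) * (q ^ (a * x + x) * qnum (q ^ a) x ^ (m - 1)) := by
  have h1q : (1 : ℂ) - q ≠ 0 := by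
    have := qpow_ne_one q hq0 hq1 1 one_ne_zero; simpa using this
  have h1a : (1 : ℂ) - q ^ a ≠ 0 := qpow_ne_one q hq0 hq1 a (by omega)
  set t : ℂ := q ^ (a * x) with ht
  have key : ∀ l ∈ range (m + 1),
      q ^ (x + 1) * ((m.choose l : ℂ) * (-1) ^ l * q ^ (a * l * (x + 1)) * ((a : ℂ) * l + 1) / (1 - q ^ (a * l + 1)))
        - q ^ x * ((m.choose l : ℂ) * (-1) ^ l * q ^ (a * l * x) * ((a : ℂ) * l + 1) / (1 - q ^ (a * l + 1)))
      = -(q ^ x) * ((a : ℂ) * ((m.choose l : ℂ) * (-1) ^ l * (l : ℂ) * t ^ l)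
          + (m.choose l : ℂ) * (-1) ^ l * t ^ l) := by
    intro l _
    have hd : (1 : ℂ) - q ^ (a * l + 1) ≠ 0 := qpow_ne_one q hq0 hq1 (a * l + 1) (by omega)
    have hde : (q ^ (a * l + 1) - 1) / (1 - q ^ (a * l + 1)) = -1 := by
      rw [div_eq_iff hd]; ring
    have e3 : q ^ (a * l * x) = t ^ l := by
      rw [ht, ← pow_mul]; congr 1; ring
    have e4 : q ^ (x + 1) * q ^ (a * l * (x + 1)) = t ^ l * q ^ (a * l + 1) * q ^ x := by
      rw [ht, ← pow_mul, ← pow_add, ← pow_add, ← pow_add]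
      congr 1; ring
    rw [e3]
    linear_combination ((m.choose l : ℂ) * (-1) ^ l * ((a : ℂ) * l + 1) / (1 - q ^ (a * l + 1))) * e4
      + ((m.choose l : ℂ) * (-1) ^ l * ((a : ℂ) * l + 1) * q ^ x * t ^ l) * hde
  simp only [qBpoly]
  rw [mul_left_comm, mul_left_comm (q ^ x), ← mul_sub, Finset.mul_sum, Finset.mul_sum,
    ← Finset.sum_sub_distrib, Finset.sum_congr rfl key, ← Finset.mul_sum,
    Finset.sum_add_distrib, ← Finset.mul_sum, binom1, binom2]
  have hax : (q ^ a) ^ x = t := by rw [ht, pow_mul]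
  have haxx : q ^ (a * x + x) = t * q ^ x := by rw [pow_add, ht]
  simp only [qnum, hax, haxx]
  have hpa : ((1 : ℂ) - q ^ a) ^ m ≠ 0 := pow_ne_zero _ h1a
  cases m with
  | zero => field_simp; ring
  | succ k =>
    simp only [Nat.succ_sub_one]
    push_cast
    simp only [div_pow]
    field_simp
    ring

theorem stmt4 (q : ℂ) (hq0 : 0 < ‖q‖) (hq1 : ‖q‖ < 1)
    (m a n : ℕ) (ha : 1 ≤ a) (hn : 1 ≤ n) :
    q ^ n * qBpoly q a m n - qB q a m =
      (q - 1) * ∑ l ∈ Finset.range n, q ^ l * qnum (q ^ a) l ^ m +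
        ((m : ℂ) * a / qnum q a) * ∑ l ∈ Finset.range n, q ^ (a * l + l) * qnum (q ^ a) l ^ (m - 1) := by
  have hq0' : q ≠ 0 := by
    intro h; rw [h] at hq0; simp at hq0
  have h0 : qB q a m = q ^ 0 * qBpoly q a m 0 := by
    simp [qB, qBpoly]
  rw [h0, ← Finset.sum_range_sub (fun l => q ^ l * qBpoly q a m l) n,
    Finset.mul_sum, Finset.mul_sum, ← Finset.sum_add_distrib]
  exact Finset.sum_congr rfl fun l _ => step q hq0' hq1 m a ha l
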